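/- arXiv:2309.12268 — 2 statements merged into one kernel-verified Lean document; each statement's English description precedes it below -/
import Mathlib

section
/- For 0 < β < 1, the function v_β(r) = -r·((ln β)/π)·sin(π·(ln r)/(ln β)) is positive on the annulus {β < r < 1} and satisfies the equation v·Δv = |∇v|² - 1 on the annulus B_1 \ closure(B_β) ⊂ ℝ² (with v viewed as a radial function v(x) = v_β(|x|)), with v = 0 on both boundary circles |x| = β and |x| = 1. -/
/-- The Euclidean Laplacian on ℝ² ≅ ℂ. -/
noncomputable def lap (u : ℂ → ℝ) (z : ℂ) : ℝ :=
  fderiv ℝ (fun w => fderiv ℝ u w 1) z 1 +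
  fderiv ℝ (fun w => fderiv ℝ u w Complex.I) z Complex.I

noncomputable def Dcl (a b : ℝ) : ℂ →L[ℝ] ℝ := a • Complex.reCLM + b • Complex.imCLM

lemma Dcl_apply (a b : ℝ) (h : ℂ) : Dcl a b h = a * h.re + b * h.im := by
  simp [Dcl]

lemma norm_hasFDerivAt (x : ℂ) (hx : x ≠ 0) :
    HasFDerivAt (fun w : ℂ => ‖w‖) (Dcl (x.re / ‖x‖) (x.im / ‖x‖)) x := by
  have hn2 : HasFDerivAt (fun w : ℂ => w.re * w.re + w.im * w.im)
      (Dcl (2 * x.re) (2 * x.im)) x := by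
    have hre : HasFDerivAt (fun w : ℂ => w.re) Complex.reCLM x := Complex.reCLM.hasFDerivAt
    have him : HasFDerivAt (fun w : ℂ => w.im) Complex.imCLM x := Complex.imCLM.hasFDerivAt
    have := (hre.mul hre).add (him.mul him)
    refine this.congr_fderiv ?_
    refine ContinuousLinearMap.ext fun h => ?_
    simp [Dcl]
    ring
  have hne : x.re * x.re + x.im * x.im ≠ 0 := by
    have := Complex.normSq_pos.mpr hx
    rw [Complex.normSq_apply] at this
    exact ne_of_gt this
  have h := (Real.hasDerivAt_sqrt hne).comp_hasFDerivAt x hn2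
  have heq : (fun w : ℂ => ‖w‖)
      = (fun t => Real.sqrt t) ∘ (fun w : ℂ => w.re * w.re + w.im * w.im) := by
    funext w
    simp [Function.comp, Complex.norm_def, Complex.normSq_apply]
  rw [heq]
  refine h.congr_fderiv ?_
  have hs : Real.sqrt (x.re * x.re + x.im * x.im) = ‖x‖ := by
    simp [Complex.norm_def, Complex.normSq_apply]
  refine ContinuousLinearMap.ext fun h => ?_
  rw [ContinuousLinearMap.smul_apply, Dcl_apply, Dcl_apply, hs]
  have hnorm : ‖x‖ ≠ 0 := norm_ne_zero_iff.mpr hx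
  field_simp
  have hinv := mul_inv_cancel₀ hnorm
  linear_combination (x.re * h.re + x.im * h.im) * hinv

lemma smul_Dcl (c a b : ℝ) : c • Dcl a b = Dcl (c * a) (c * b) := by
  refine ContinuousLinearMap.ext fun h => ?_
  rw [ContinuousLinearMap.smul_apply, Dcl_apply, Dcl_apply]
  simp
  ring

lemma radial_hasFDerivAt (g g' : ℝ → ℝ) (x : ℂ) (hx : x ≠ 0)
    (hg : HasDerivAt g (g' ‖x‖) ‖x‖) :
    HasFDerivAt (fun w : ℂ => g ‖w‖)
      (Dcl (g' ‖x‖ * (x.re / ‖x‖)) (g' ‖x‖ * (x.im / ‖x‖))) x := by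
  have h := hg.comp_hasFDerivAt x (norm_hasFDerivAt x hx)
  rw [smul_Dcl] at h
  exact h

noncomputable def pg1 (c k t : ℝ) : ℝ :=
  -(c * Real.sin (k * Real.log t)) - Real.cos (k * Real.log t)

noncomputable def pg2 (k t : ℝ) : ℝ :=
  (-(Real.cos (k * Real.log t)) + k * Real.sin (k * Real.log t)) / t

noncomputable def ph3 (c k t : ℝ) : ℝ := pg1 c k t / t

noncomputable def ph3' (c k t : ℝ) : ℝ := (pg2 k t * t - pg1 c k t * 1) / t ^ 2

lemma profile_deriv (c k t : ℝ) (hck : c * k = 1) (ht : 0 < t) :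
    HasDerivAt (fun u => -u * c * Real.sin (k * Real.log u)) (pg1 c k t) t := by
  have h1 : HasDerivAt (fun u : ℝ => k * Real.log u) (k * t⁻¹) t :=
    (Real.hasDerivAt_log ht.ne').const_mul k
  have h4 := ((hasDerivAt_id t).mul h1.sin).const_mul (-c)
  have heq : (fun u => -u * c * Real.sin (k * Real.log u))
      = fun u => -c * (u * Real.sin (k * Real.log u)) := by funext u; ring
  rw [heq]
  refine h4.congr_deriv ?_
  simp only [id, pg1]
  have htne : t ≠ 0 := ht.ne'
  field_simp
  linear_combination (-Real.cos (k * Real.log t)) * hck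

lemma profile_deriv2 (c k t : ℝ) (hck : c * k = 1) (ht : 0 < t) :
    HasDerivAt (pg1 c k) (pg2 k t) t := by
  have h1 : HasDerivAt (fun u : ℝ => k * Real.log u) (k * t⁻¹) t :=
    (Real.hasDerivAt_log ht.ne').const_mul k
  have h := ((h1.sin.const_mul c).neg).sub h1.cos
  refine h.congr_deriv ?_
  simp only [pg2]
  have htne : t ≠ 0 := ht.ne'
  field_simp
  linear_combination (-Real.cos (k * Real.log t)) * hck

lemma ph3_deriv (c k t : ℝ) (hck : c * k = 1) (ht : 0 < t) :
    HasDerivAt (ph3 c k) (ph3' c k t) t := by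
  have h := (profile_deriv2 c k t hck ht).div (hasDerivAt_id t) ht.ne'
  simp only [ph3, ph3', id] at *
  exact h

lemma Pfun_hasFDerivAt (c k : ℝ) (hck : c * k = 1) (x : ℂ) (hr : 0 < ‖x‖) :
    HasFDerivAt (fun w : ℂ => ph3 c k ‖w‖ * w.re)
      ((ph3 c k ‖x‖) • Complex.reCLM +
        x.re • Dcl (ph3' c k ‖x‖ * (x.re / ‖x‖)) (ph3' c k ‖x‖ * (x.im / ‖x‖))) x := by
  have hx : x ≠ 0 := by simpa using norm_pos_iff.mp hr
  have h1 := radial_hasFDerivAt (ph3 c k) (ph3' c k) x hx (ph3_deriv c k ‖x‖ hck hr)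
  exact h1.mul Complex.reCLM.hasFDerivAt

lemma Qfun_hasFDerivAt (c k : ℝ) (hck : c * k = 1) (x : ℂ) (hr : 0 < ‖x‖) :
    HasFDerivAt (fun w : ℂ => ph3 c k ‖w‖ * w.im)
      ((ph3 c k ‖x‖) • Complex.imCLM +
        x.im • Dcl (ph3' c k ‖x‖ * (x.re / ‖x‖)) (ph3' c k ‖x‖ * (x.im / ‖x‖))) x := by
  have hx : x ≠ 0 := by simpa using norm_pos_iff.mp hr
  have h1 := radial_hasFDerivAt (ph3 c k) (ph3' c k) x hx (ph3_deriv c k ‖x‖ hck hr)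
  exact h1.mul Complex.imCLM.hasFDerivAt

lemma final_alg (c k r a b : ℝ) (hck : c * k = 1) (hab : a ^ 2 + b ^ 2 = r ^ 2) (hr : r ≠ 0) :
    -r * c * Real.sin (k * Real.log r) *
      ((ph3 c k r + a * (ph3' c k r * (a / r))) + (ph3 c k r + b * (ph3' c k r * (b / r))))
      = (pg1 c k r * (a / r)) ^ 2 + (pg1 c k r * (b / r)) ^ 2 - 1 := by
  simp only [pg1, pg2, ph3, ph3']
  set s := Real.sin (k * Real.log r) with hs
  set co := Real.cos (k * Real.log r) with hco
  have hpy : s ^ 2 + co ^ 2 = 1 := Real.sin_sq_add_cos_sq _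
  field_simp
  linear_combination (-(2 * c * s * co) - c * k * s ^ 2 - 2 * c ^ 2 * s ^ 2 - co ^ 2) * hab + (-(r ^ 2)) * hpy + (-(r ^ 2 * s ^ 2)) * hck

theorem stmt1 (β : ℝ) (hβ : 0 < β) (hβ1 : β < 1)
    (vβ : ℝ → ℝ)
    (hvβ : ∀ r : ℝ,
      vβ r = -r * (Real.log β / Real.pi) * Real.sin (Real.pi * Real.log r / Real.log β))
    (v : ℂ → ℝ) (hv : ∀ x : ℂ, v x = vβ ‖x‖) :
    (∀ r ∈ Set.Ioo β 1, 0 < vβ r) ∧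
    (∀ x : ℂ, β < ‖x‖ → ‖x‖ < 1 →
      v x * lap v x = (fderiv ℝ v x 1) ^ 2 + (fderiv ℝ v x Complex.I) ^ 2 - 1) ∧
    vβ β = 0 ∧ vβ 1 = 0 := by
  have hπ : (0:ℝ) < Real.pi := Real.pi_pos
  have hL : Real.log β < 0 := Real.log_neg hβ hβ1
  have hLne : Real.log β ≠ 0 := ne_of_lt hL
  set c : ℝ := Real.log β / Real.pi with hc
  set k : ℝ := Real.pi / Real.log β with hk
  have hck : c * k = 1 := by rw [hc, hk]; field_simp
  have hvβfun : vβ = fun t => -t * c * Real.sin (k * Real.log t) := by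
    funext t
    rw [hvβ t]
    congr 2
    rw [hk]; ring
  refine ⟨?_, ?_, ?_, ?_⟩
  · -- positivity
    rintro r ⟨h1, h2⟩
    have hr0 : 0 < r := hβ.trans h1
    rw [hvβ r]
    have hlogneg : Real.log r < 0 := Real.log_neg hr0 h2
    have hlogβlt : Real.log β < Real.log r := Real.log_lt_log hβ h1
    have hθpos : 0 < Real.pi * Real.log r / Real.log β := by
      apply div_pos_of_neg_of_neg
      · exact mul_neg_of_pos_of_neg hπ hlogneg
      · exact hL
    have hθlt : Real.pi * Real.log r / Real.log β < Real.pi := by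
      rw [div_lt_iff_of_neg hL]
      exact (mul_lt_mul_iff_right₀ hπ).mpr hlogβlt
    have hsin : 0 < Real.sin (Real.pi * Real.log r / Real.log β) :=
      Real.sin_pos_of_pos_of_lt_pi hθpos hθlt
    have hcneg : 0 < -c := neg_pos.mpr (div_neg_of_neg_of_pos hL hπ)
    nlinarith [mul_pos (mul_pos hr0 hcneg) hsin]
  · -- the PDE
    intro x hx1 hx2
    have hr0 : 0 < ‖x‖ := hβ.trans hx1
    have hx : x ≠ 0 := by intro h; rw [h] at hr0; simp at hr0
    have hvfun : v = fun w : ℂ => vβ ‖w‖ := funext hv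
    set r : ℝ := ‖x‖ with hrdef
    have hrne : r ≠ 0 := hr0.ne'
    -- first derivative of v at any nonzero point
    have hvF : ∀ w : ℂ, w ≠ 0 → HasFDerivAt v
        (Dcl (pg1 c k ‖w‖ * (w.re / ‖w‖)) (pg1 c k ‖w‖ * (w.im / ‖w‖))) w := by
      intro w hw
      rw [hvfun]
      refine radial_hasFDerivAt vβ (pg1 c k) w hw ?_
      rw [hvβfun]
      exact profile_deriv c k ‖w‖ hck (norm_pos_iff.mpr hw)
    -- eventual equality of first partials with explicit formulas
    have hev : ∀ᶠ w in nhds x, w ≠ 0 := eventually_ne_nhds hx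
    have hP : (fun w => fderiv ℝ v w 1) =ᶠ[nhds x] (fun w : ℂ => ph3 c k ‖w‖ * w.re) := by
      filter_upwards [hev] with w hw
      rw [(hvF w hw).fderiv, Dcl_apply]
      simp only [Complex.one_re, Complex.one_im, ph3]
      ring
    have hQ : (fun w => fderiv ℝ v w Complex.I) =ᶠ[nhds x] (fun w : ℂ => ph3 c k ‖w‖ * w.im) := by
      filter_upwards [hev] with w hw
      rw [(hvF w hw).fderiv, Dcl_apply]
      simp only [Complex.I_re, Complex.I_im, ph3]
      ring
    have e1 : fderiv ℝ (fun w => fderiv ℝ v w 1) x 1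
        = ph3 c k r + x.re * (ph3' c k r * (x.re / r)) := by
      rw [hP.fderiv_eq, (Pfun_hasFDerivAt c k hck x hr0).fderiv]
      rw [ContinuousLinearMap.add_apply, ContinuousLinearMap.smul_apply,
        ContinuousLinearMap.smul_apply, Dcl_apply, ← hrdef]
      simp [Complex.one_re, Complex.one_im]
    have e2 : fderiv ℝ (fun w => fderiv ℝ v w Complex.I) x Complex.I
        = ph3 c k r + x.im * (ph3' c k r * (x.im / r)) := by
      rw [hQ.fderiv_eq, (Qfun_hasFDerivAt c k hck x hr0).fderiv]
      rw [ContinuousLinearMap.add_apply, ContinuousLinearMap.smul_apply,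
        ContinuousLinearMap.smul_apply, Dcl_apply, ← hrdef]
      simp [Complex.I_re, Complex.I_im]
    have ev1 : fderiv ℝ v x 1 = pg1 c k r * (x.re / r) := by
      rw [(hvF x hx).fderiv, Dcl_apply, ← hrdef]
      simp
    have ev2 : fderiv ℝ v x Complex.I = pg1 c k r * (x.im / r) := by
      rw [(hvF x hx).fderiv, Dcl_apply, ← hrdef]
      simp
    have hvx : v x = -r * c * Real.sin (k * Real.log r) := by
      rw [hv x, hvβfun]
    have hab : x.re ^ 2 + x.im ^ 2 = r ^ 2 := by
      rw [hrdef]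
      rw [Complex.sq_norm, Complex.normSq_apply]
      ring
    rw [lap, e1, e2, ev1, ev2, hvx]
    exact final_alg c k r x.re x.im hck hab hrne
  · -- vβ β = 0
    rw [hvβ β]
    rw [show Real.pi * Real.log β / Real.log β = Real.pi by field_simp]
    simp [Real.sin_pi]
  · -- vβ 1 = 0
    rw [hvβ 1]
    simp
end

section
/- Let Ω ⊂ ℝ² be a bounded domain and let u₁, u₂ be C² functions on Ω with u₁, u₂ ≥ 2·log 2 satisfying Δu_i = C·e^{2u_i} for a constant C > 0. Fix s ∈ (1/2, 1). If s·u₁ - u₂ attains a positive interior maximum at some point x₀ ∈ Ω, then a contradiction arises: 0 ≥ Δ(s·u₁ - u₂)(x₀) = C(s·e^{2u₁(x₀)} - e^{2u₂(x₀)}) > 0. -/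
open Real Filter Topology

/-- 1D second-derivative test: at a local max, the second derivative is nonpositive. -/
lemma secondDeriv_nonpos_aux (g : ℝ → ℝ)
    (hd : ∀ᶠ t in 𝓝 (0:ℝ), DifferentiableAt ℝ g t)
    (hmax : ∀ᶠ t in 𝓝 (0:ℝ), g t ≤ g 0)
    (Q : ℝ) (hQ : HasDerivAt (deriv g) Q 0) : Q ≤ 0 := by
  by_contra hpos
  push_neg at hpos
  have h0 : deriv g 0 = 0 := by
    have hm : IsLocalMax g 0 := hmax
    exact hm.deriv_eq_zero
  have hs := hasDerivAt_iff_tendsto_slope.mp hQ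
  have hev : ∀ᶠ t in 𝓝[≠] (0:ℝ), 0 < slope (deriv g) 0 t :=
    hs (Ioi_mem_nhds hpos)
  rw [eventually_nhdsWithin_iff] at hev
  have hall : ∀ᶠ t in 𝓝 (0:ℝ),
      DifferentiableAt ℝ g t ∧ g t ≤ g 0 ∧ (t ∈ ({(0:ℝ)}ᶜ : Set ℝ) → 0 < slope (deriv g) 0 t) :=
    hd.and (hmax.and hev)
  rcases Metric.eventually_nhds_iff.mp hall with ⟨ε, hε, hP⟩
  have hc : (0:ℝ) < ε / 2 := by linarith
  have hmem : ∀ t ∈ Set.Icc (0:ℝ) (ε/2), dist t 0 < ε := by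
    intro t ht
    rw [Real.dist_eq, sub_zero, abs_of_nonneg ht.1]
    linarith [ht.2]
  have hsm : StrictMonoOn g (Set.Icc (0:ℝ) (ε/2)) := by
    apply strictMonoOn_of_deriv_pos (convex_Icc _ _)
    · intro t ht
      exact ((hP (hmem t ht)).1.continuousAt).continuousWithinAt
    · intro t ht
      rw [interior_Icc] at ht
      have htmem : dist t 0 < ε := hmem t ⟨ht.1.le, ht.2.le⟩
      have hne : t ∈ ({(0:ℝ)}ᶜ : Set ℝ) := by
        simp [ne_of_gt ht.1]
      have hsl := (hP htmem).2.2 hne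
      rw [slope_def_field, h0, sub_zero, sub_zero] at hsl
      have := mul_pos hsl ht.1
      rwa [div_mul_cancel₀ _ (ne_of_gt ht.1)] at this
  have hlt : g 0 < g (ε/2) :=
    hsm (by constructor <;> [rfl; exact hc.le]) ⟨hc.le, le_refl _⟩ hc
  have hle : g (ε/2) ≤ g 0 := by
    have : dist (ε/2) 0 < ε := by
      rw [Real.dist_eq, sub_zero, abs_of_pos hc]; linarith
    exact (hP this).2.1
  linarith

/-- Second directional derivative at an interior max is nonpositive. -/
lemma dirSecond_nonpos (Ω : Set ℂ) (hΩo : IsOpen Ω) (f : ℂ → ℝ)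
    (hf : ContDiffOn ℝ 2 f Ω) (x₀ : ℂ) (hx₀ : x₀ ∈ Ω)
    (hmax : IsMaxOn f Ω x₀) (v : ℂ) :
    fderiv ℝ (fun w => fderiv ℝ f w v) x₀ v ≤ 0 := by
  set h : ℝ → ℂ := fun t => x₀ + t • v with hhdef
  have hht : ∀ t : ℝ, HasDerivAt h v t := by
    intro t
    have : HasDerivAt (fun t : ℝ => t • v) ((1:ℝ) • v) t :=
      (hasDerivAt_id t).smul_const v
    simpa [hhdef] using this.const_add x₀
  have hh0 : h 0 = x₀ := by simp [hhdef]
  have hdiffΩ : ∀ w ∈ Ω, DifferentiableAt ℝ f w := fun w hw =>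
    ((hf.differentiableOn two_ne_zero) w hw).differentiableAt (hΩo.mem_nhds hw)
  -- eventually h t ∈ Ω
  have hmemΩ : ∀ᶠ t in 𝓝 (0:ℝ), h t ∈ Ω := by
    have : ContinuousAt h 0 := (hht 0).continuousAt
    have := this.preimage_mem_nhds (by rw [hh0]; exact hΩo.mem_nhds hx₀)
    exact this
  set g : ℝ → ℝ := fun t => f (h t) with hgdef
  have hgd : ∀ᶠ t in 𝓝 (0:ℝ), HasDerivAt g (fderiv ℝ f (h t) v) t := by
    filter_upwards [hmemΩ] with t ht
    exact ((hdiffΩ _ ht).hasFDerivAt.comp_hasDerivAt t (hht t))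
  have hd : ∀ᶠ t in 𝓝 (0:ℝ), DifferentiableAt ℝ g t := by
    filter_upwards [hgd] with t ht using ht.differentiableAt
  have hgmax : ∀ᶠ t in 𝓝 (0:ℝ), g t ≤ g 0 := by
    filter_upwards [hmemΩ] with t ht
    have := hmax ht
    simpa [hgdef, hh0] using this
  -- φ : second level
  set φ : ℂ → ℝ := fun w => fderiv ℝ f w v with hφdef
  have hfd1 : ContDiffOn ℝ 1 (fderiv ℝ f) Ω := by
    have h2 : ContDiffOn ℝ (1+1 : ℕ) f Ω := by exact_mod_cast hf
    exact ((contDiffOn_succ_iff_fderiv_of_isOpen hΩo).mp h2).2.2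
  have hFd : DifferentiableAt ℝ (fderiv ℝ f) x₀ :=
    ((hfd1.differentiableOn one_ne_zero) x₀ hx₀).differentiableAt (hΩo.mem_nhds hx₀)
  have hφd : DifferentiableAt ℝ φ x₀ := by
    have : φ = (fun L : ℂ →L[ℝ] ℝ => L v) ∘ fderiv ℝ f := rfl
    rw [this]
    exact ((ContinuousLinearMap.apply ℝ ℝ v).differentiableAt).comp x₀ hFd
  set Q : ℝ := fderiv ℝ φ x₀ v with hQdef
  have hQ : HasDerivAt (φ ∘ h) Q 0 := by
    have h' : HasFDerivAt φ (fderiv ℝ φ x₀) (h 0) := hh0 ▸ hφd.hasFDerivAt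
    exact h'.comp_hasDerivAt 0 (hht 0)
  have heq : deriv g =ᶠ[𝓝 (0:ℝ)] φ ∘ h := by
    filter_upwards [hgd] with t ht
    simp [hφdef, Function.comp, ht.deriv]
  have hQ' : HasDerivAt (deriv g) Q 0 := hQ.congr_of_eventuallyEq heq
  exact secondDeriv_nonpos_aux g hd hgmax Q hQ'

theorem stmt14 (Ω : Set ℂ) (hΩo : IsOpen Ω) (hΩb : Bornology.IsBounded Ω)
    (u₁ u₂ : ℂ → ℝ) (h1 : ContDiffOn ℝ 2 u₁ Ω) (h2 : ContDiffOn ℝ 2 u₂ Ω)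
    (hb1 : ∀ x ∈ Ω, 2 * Real.log 2 ≤ u₁ x) (hb2 : ∀ x ∈ Ω, 2 * Real.log 2 ≤ u₂ x)
    (C : ℝ) (hC : 0 < C)
    (he1 : ∀ x ∈ Ω, lap u₁ x = C * Real.exp (2 * u₁ x))
    (he2 : ∀ x ∈ Ω, lap u₂ x = C * Real.exp (2 * u₂ x))
    (s : ℝ) (hs : 1 / 2 < s) (hs1 : s < 1)
    (x₀ : ℂ) (hx₀ : x₀ ∈ Ω)
    (hmax : IsMaxOn (fun x => s * u₁ x - u₂ x) Ω x₀)
    (hpos : 0 < s * u₁ x₀ - u₂ x₀) : False := by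
  set f : ℂ → ℝ := fun x => s * u₁ x - u₂ x with hfdef
  have hf : ContDiffOn ℝ 2 f Ω := (contDiffOn_const.mul h1).sub h2
  have hd1 : ∀ w ∈ Ω, DifferentiableAt ℝ u₁ w := fun w hw =>
    ((h1.differentiableOn two_ne_zero) w hw).differentiableAt (hΩo.mem_nhds hw)
  have hd2 : ∀ w ∈ Ω, DifferentiableAt ℝ u₂ w := fun w hw =>
    ((h2.differentiableOn two_ne_zero) w hw).differentiableAt (hΩo.mem_nhds hw)
  -- second derivatives of f decompose
  have hdF : ∀ (u : ℂ → ℝ), ContDiffOn ℝ 2 u Ω → ∀ v : ℂ,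
      DifferentiableAt ℝ (fun w => fderiv ℝ u w v) x₀ := by
    intro u hu v
    have hfd1 : ContDiffOn ℝ 1 (fderiv ℝ u) Ω := by
      have h2' : ContDiffOn ℝ (1+1 : ℕ) u Ω := by exact_mod_cast hu
      exact ((contDiffOn_succ_iff_fderiv_of_isOpen hΩo).mp h2').2.2
    have hFd : DifferentiableAt ℝ (fderiv ℝ u) x₀ :=
      ((hfd1.differentiableOn one_ne_zero) x₀ hx₀).differentiableAt (hΩo.mem_nhds hx₀)
    exact ((ContinuousLinearMap.apply ℝ ℝ v).differentiableAt).comp x₀ hFd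
  have hsplit : ∀ v : ℂ, fderiv ℝ (fun w => fderiv ℝ f w v) x₀ v =
      s * fderiv ℝ (fun w => fderiv ℝ u₁ w v) x₀ v
        - fderiv ℝ (fun w => fderiv ℝ u₂ w v) x₀ v := by
    intro v
    have heq : (fun w => fderiv ℝ f w v) =ᶠ[𝓝 x₀]
        (fun w => s * fderiv ℝ u₁ w v - fderiv ℝ u₂ w v) := by
      filter_upwards [hΩo.mem_nhds hx₀] with w hw
      have hferiv : fderiv ℝ f w = s • fderiv ℝ u₁ w - fderiv ℝ u₂ w := by
        rw [hfdef]
        rw [fderiv_fun_sub ((hd1 w hw).const_mul s) (hd2 w hw), fderiv_const_mul (hd1 w hw)]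
      rw [hferiv]
      simp
    rw [heq.fderiv_eq]
    have hA := hdF u₁ h1 v
    have hB := hdF u₂ h2 v
    rw [fderiv_fun_sub ((hA).const_mul s) hB, fderiv_const_mul hA]
    simp
  have hkey1 := dirSecond_nonpos Ω hΩo f hf x₀ hx₀ hmax 1
  have hkeyI := dirSecond_nonpos Ω hΩo f hf x₀ hx₀ hmax Complex.I
  rw [hsplit 1] at hkey1
  rw [hsplit Complex.I] at hkeyI
  -- so s * lap u₁ x₀ - lap u₂ x₀ ≤ 0
  have hlap : s * lap u₁ x₀ - lap u₂ x₀ ≤ 0 := by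
    rw [lap, lap]; ring_nf; ring_nf at hkey1 hkeyI; linarith
  rw [he1 x₀ hx₀, he2 x₀ hx₀] at hlap
  -- now derive positivity
  set a := u₁ x₀ with ha
  set b := u₂ x₀ with hb
  have ha2 : 2 * Real.log 2 ≤ a := hb1 x₀ hx₀
  have hba : b < s * a := by linarith
  have hs0 : (0:ℝ) < s := by linarith
  have hlog2 : (0.6931471803:ℝ) < Real.log 2 := Real.log_two_gt_d9
  have hlogs : -Real.log s ≤ 2 * (1 - s) * a := by
    have h1' : Real.log s⁻¹ ≤ s⁻¹ - 1 := Real.log_le_sub_one_of_pos (by positivity)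
    rw [Real.log_inv] at h1'
    have hsinv : s⁻¹ < 2 := by
      rw [inv_lt_comm₀ hs0 (by norm_num)]
      linarith
    have ha1 : (1:ℝ) ≤ a := by nlinarith
    have hss : s * s⁻¹ = 1 := mul_inv_cancel₀ (ne_of_gt hs0)
    nlinarith [mul_nonneg (sub_nonneg.mpr hs1.le) (sub_nonneg.mpr hsinv.le),
      mul_nonneg (sub_nonneg.mpr hs1.le) (sub_nonneg.mpr ha1)]
  have hexp1 : Real.exp (2 * (s * a)) ≤ s * Real.exp (2 * a) := by
    rw [show s * Real.exp (2*a) = Real.exp (Real.log s + 2 * a) by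
      rw [Real.exp_add, Real.exp_log hs0]]
    apply Real.exp_le_exp.mpr
    nlinarith
  have hexp2 : Real.exp (2 * b) < Real.exp (2 * (s * a)) :=
    Real.exp_lt_exp.mpr (by linarith)
  nlinarith [Real.exp_pos (2*a), Real.exp_pos (2*b)]
end
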